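/- The n+r polynomials (ψ_0,…,ψ_{q_1r-1}, γ_{n-r_1},…,γ_{n-1}, b_0,…,b_{r-1}) form a local coordinate system around zero on ℂ^n × ℂ^r: each of these polynomials has zero constant term, and the (n+r)×(n+r) Jacobian matrix of this tuple with respect to (a_0,…,a_{n-1},b_0,…,b_{r-1}) evaluated at the origin is invertible. Moreover, defining γ_0,…,γ_{n-1} ∈ R as the coefficients of t^n,…,t^1 respectively in the power series (1 + b_{r-1}t + ⋯ + b_0 t^r)^{-q_1}·(1 + a_{n-1}t + ⋯ + a_0 t^n) truncated mod t^{n+1}, the ring R is generated as a ℂ-algebra by γ_0,…,γ_{n-1}, b_0,…,b_{r-1}. -/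

import Mathlib

open MvPolynomial Matrix

noncomputable section

namespace TB

/-- The polynomial ring `ℂ[a_0,…,a_{n-1},b_0,…,b_{r-1}]`: variable `Sum.inl i` is `a_i`
and `Sum.inr j` is `b_j`. -/
abbrev R (n r : ℕ) : Type := MvPolynomial (Fin n ⊕ Fin r) ℂ

/-- The power series `1 + (cf 1)·t + ⋯ + (cf m)·t^m`. -/
def ser {A : Type*} [CommRing A] (m : ℕ) (cf : ℕ → A) : PowerSeries A :=
  PowerSeries.mk fun k => if k = 0 then 1 else if k ≤ m then cf k else 0

/-- `1 + a_{n-1} t + ⋯ + a_0 t^n`. -/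
def Aser (n r : ℕ) : PowerSeries (R n r) :=
  ser n fun k => if h : 1 ≤ k ∧ k ≤ n then X (Sum.inl ⟨n - k, by omega⟩) else 0

/-- `1 + b_{r-1} t + ⋯ + b_0 t^r`. -/
def Bser (n r : ℕ) : PowerSeries (R n r) :=
  ser r fun k => if h : 1 ≤ k ∧ k ≤ r then X (Sum.inr ⟨r - k, by omega⟩) else 0

/-- `1 + d_{n-1} t + ⋯ + d_0 t^n`. -/
def Dser (n r : ℕ) (d : Fin n → R n r) : PowerSeries (R n r) :=
  ser n fun k => if h : 1 ≤ k ∧ k ≤ n then d ⟨n - k, by omega⟩ else 0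

/-- `1 + d_{n-1} t + ⋯ + d_1 t^{n-1}`. -/
def Dhatser (n r : ℕ) (d : Fin n → R n r) : PowerSeries (R n r) :=
  ser (n - 1) fun k => if h : 1 ≤ k ∧ k ≤ n - 1 then d ⟨n - k, by omega⟩ else 0

/-- `f(x) = x^n + a_{n-1}x^{n-1} + ⋯ + a_0`. -/
def fpoly (n r : ℕ) : Polynomial (R n r) :=
  Polynomial.X ^ n + ∑ i : Fin n, Polynomial.C (X (Sum.inl i)) * Polynomial.X ^ (i : ℕ)

/-- `g(x) = x^r + b_{r-1}x^{r-1} + ⋯ + b_0`. -/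
def gpoly (n r : ℕ) : Polynomial (R n r) :=
  Polynomial.X ^ r + ∑ j : Fin r, Polynomial.C (X (Sum.inr j)) * Polynomial.X ^ (j : ℕ)

/-- The coefficient `c_k` of `f·g`, for `0 ≤ k ≤ n+r-1`. -/
def cc (n r : ℕ) (k : Fin (n + r)) : R n r := (fpoly n r * gpoly n r).coeff (k : ℕ)

/-- `d_0, …, d_{n-1}` are the unique polynomials with
`(1 + b_{r-1}t + ⋯ + b_0 t^r)(1 + d_{n-1}t + ⋯ + d_0 t^n) ≡ 1 + a_{n-1}t + ⋯ + a_0 t^n (mod t^{n+1})`. -/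
def dSpec (n r : ℕ) (d : Fin n → R n r) : Prop :=
  ∀ k ≤ n, PowerSeries.coeff k (Bser n r * Dser n r d)
    = PowerSeries.coeff k (Aser n r)

/-- `ψ_i = d_i` for `0 ≤ i ≤ r-1`, and
`ψ_{s·r+i} = ∂^s d_{r-1} / (∂b_0^{s-1} ∂b_{r-1-i})` for `s ≥ 1`, `0 ≤ i ≤ r-1`. -/
def psi (n r : ℕ) (hr : 0 < r) (hrn : r ≤ n) (d : Fin n → R n r) (m : ℕ) : R n r :=
  if h : m < r then d ⟨m, by omega⟩
  else
    (fun q => pderiv (Sum.inr (⟨0, hr⟩ : Fin r)) q)^[m / r - 1]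
      (pderiv (Sum.inr (⟨r - 1 - m % r, by omega⟩ : Fin r)) (d ⟨r - 1, by omega⟩))

/-- The `m×m` lower shift matrix over `R n r`. -/
def Lmat (n r m : ℕ) : Matrix (Fin m) (Fin m) (R n r) :=
  Matrix.of fun i j => if (i : ℕ) = (j : ℕ) + 1 then 1 else 0

/-- `B = I_n + b_{r-1}L_n + ⋯ + b_0 L_n^r`. -/
def Bmat (n r : ℕ) (hr : 0 < r) : Matrix (Fin n) (Fin n) (R n r) :=
  1 + ∑ k ∈ Finset.range r, (X (Sum.inr (⟨r - 1 - k, by omega⟩ : Fin r)) : R n r) • Lmat n r n ^ (k + 1)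

/-- `D̂ = I_n + d_{n-1}L_n + ⋯ + d_1 L_n^{n-1}`. -/
def Dhat (n r : ℕ) (hn : 0 < n) (d : Fin n → R n r) : Matrix (Fin n) (Fin n) (R n r) :=
  1 + ∑ k ∈ Finset.range (n - 1), d ⟨n - 1 - k, by omega⟩ • Lmat n r n ^ (k + 1)

/-- `D`: the first `r` columns of `D̂`. -/
def Dmat (n r : ℕ) (hn : 0 < n) (hrn : r ≤ n) (d : Fin n → R n r) :
    Matrix (Fin n) (Fin r) (R n r) :=
  (Dhat n r hn d).submatrix id (Fin.castLE hrn)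

/-- `Â = I_n + a_{n-1}L_n + ⋯ + a_1 L_n^{n-1}`. -/
def Ahat (n r : ℕ) (hn : 0 < n) : Matrix (Fin n) (Fin n) (R n r) :=
  1 + ∑ k ∈ Finset.range (n - 1),
    (X (Sum.inl (⟨n - 1 - k, by omega⟩ : Fin n)) : R n r) • Lmat n r n ^ (k + 1)

/-- `A`: the first `r` columns of `Â`. -/
def Amat (n r : ℕ) (hn : 0 < n) (hrn : r ≤ n) : Matrix (Fin n) (Fin r) (R n r) :=
  (Ahat n r hn).submatrix id (Fin.castLE hrn)

/-- The Jacobian matrix of a family `p` of elements of `R n r`: the row of index `i` is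
`(∂p_i/∂a_{n-1}, …, ∂p_i/∂a_0, ∂p_i/∂b_{r-1}, …, ∂p_i/∂b_0)`. -/
def jac {n r : ℕ} {ι : Type*} (p : ι → R n r) : Matrix ι (Fin (n + r)) (R n r) :=
  Matrix.of fun i j =>
    if h : (j : ℕ) < n then pderiv (Sum.inl (⟨n - 1 - (j : ℕ), by omega⟩ : Fin n)) (p i)
    else
      pderiv (Sum.inr (⟨r - 1 - ((j : ℕ) - n), by have := j.isLt; omega⟩ : Fin r)) (p i)

/-- The set of all `k×k` minors of a matrix. -/
def minorsSet {n r : ℕ} {ι : Type*} (k : ℕ) (M : Matrix ι (Fin (n + r)) (R n r)) :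
    Set (R n r) :=
  { x | ∃ (ri : Fin k → ι) (ci : Fin k → Fin (n + r)), x = (M.submatrix ri ci).det }

/-- Evaluation at the origin `a_i = b_j = 0`. -/
def ev0 (n r : ℕ) : R n r →+* ℂ := eval fun _ => 0

/-- The maximal ideal `(a_0,…,a_{n-1},b_0,…,b_{r-1})`. -/
def mIdeal (n r : ℕ) : Ideal (R n r) :=
  Ideal.span (Set.range (X : (Fin n ⊕ Fin r) → R n r))

/-- `1 + g_1 t + ⋯ + g_{r_1} t^{r_1}` over `S = ℂ[g_1,…,g_{r_1},b_0,…,b_{r-1}] = R r1 r`,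
where `g_k` is the variable `Sum.inl ⟨k-1⟩`. -/
def Gser (r1 r : ℕ) : PowerSeries (R r1 r) :=
  ser r1 fun k => if h : 1 ≤ k ∧ k ≤ r1 then X (Sum.inl ⟨k - 1, by omega⟩) else 0

/-- `1 + w_{r-1} t + ⋯ + w_0 t^r`. -/
def Wser (r1 r : ℕ) (w : Fin r → R r1 r) : PowerSeries (R r1 r) :=
  ser r fun k => if h : 1 ≤ k ∧ k ≤ r then w ⟨r - k, by omega⟩ else 0

/-- `1 + w_{r-1} t + ⋯ + w_1 t^{r-1}`. -/
def Whatser (r1 r : ℕ) (w : Fin r → R r1 r) : PowerSeries (R r1 r) :=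
  ser (r - 1) fun k => if h : 1 ≤ k ∧ k ≤ r - 1 then w ⟨r - k, by omega⟩ else 0

/-- `w_0,…,w_{r-1}` are the unique polynomials with
`(1 + g_1 t + ⋯ + g_{r_1}t^{r_1})(1 + w_{r-1}t + ⋯ + w_0 t^r) ≡ 1 + b_{r-1}t + ⋯ + b_0 t^r
(mod t^{r+1})`. -/
def wSpec (r1 r : ℕ) (w : Fin r → R r1 r) : Prop :=
  ∀ k ≤ r, PowerSeries.coeff k (Gser r1 r * Wser r1 r w)
    = PowerSeries.coeff k (Bser r1 r)

/-- `φ'_i = w_i` for `0 ≤ i ≤ r_1-1`, and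
`φ'_{s·r_1+i} = ∂^s w_{r_1-1} / (∂g_{r_1}^{s-1} ∂g_{1+i})` for `s ≥ 1`, `0 ≤ i ≤ r_1-1`. -/
def phi' (r1 r : ℕ) (h1 : 0 < r1) (h2 : r1 < r) (w : Fin r → R r1 r) (m : ℕ) : R r1 r :=
  if h : m < r1 then w ⟨m, by omega⟩
  else
    (fun q => pderiv (Sum.inl (⟨r1 - 1, by omega⟩ : Fin r1)) q)^[m / r1 - 1]
      (pderiv (Sum.inl (⟨m % r1, Nat.mod_lt m h1⟩ : Fin r1)) (w ⟨r1 - 1, by omega⟩))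

/-- The substitution `g_k ↦ γ_{n-k}`, `b_j ↦ b_j`, from `S = R r1 r` to `R n r`. -/
def subst (n r r1 : ℕ) (γ : ℕ → R n r) : R r1 r →ₐ[ℂ] R n r :=
  aeval (Sum.elim (fun i : Fin r1 => γ (n - ((i : ℕ) + 1))) fun j : Fin r => X (Sum.inr j))


/-- From `n = q_1·r + r_1` with `q_1 ≥ 1` we get `r ≤ n`. -/
theorem rle (q1 r r1 n : ℕ) (hq1 : 1 ≤ q1) (hn : n = q1 * r + r1) : r ≤ n := by
  have := Nat.le_mul_of_pos_left r hq1
  omega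


/-- The tuple `(ψ_0,…,ψ_{q_1r-1}, γ_{n-r_1},…,γ_{n-1}, b_0,…,b_{r-1})`. -/
def tup (n r q1 : ℕ) (hr : 0 < r) (hrn : r ≤ n) (d : Fin n → R n r) (γ : ℕ → R n r) :
    Fin n ⊕ Fin r → R n r :=
  Sum.elim
    (fun i : Fin n => if (i : ℕ) < q1 * r then psi n r hr hrn d (i : ℕ) else γ (i : ℕ))
    fun j : Fin r => X (Sum.inr j)

/-- The square Jacobian matrix of `n+r` elements of `R n r` with respect to the variables
`(a_0,…,a_{n-1},b_0,…,b_{r-1})`. -/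
def jacSq (n r : ℕ) (p : Fin n ⊕ Fin r → R n r) :
    Matrix (Fin n ⊕ Fin r) (Fin n ⊕ Fin r) (R n r) :=
  Matrix.of fun i v => pderiv v (p i)

section L0
variable {σ : Type*} [DecidableEq σ] {Rc : Type*} [CommSemiring Rc]

theorem coeff_pderiv (v : σ) (m : σ →₀ ℕ) (p : MvPolynomial σ Rc) :
    coeff m (pderiv v p) = (m v + 1 : ℕ) * coeff (m + Finsupp.single v 1) p := by
  induction p using MvPolynomial.induction_on' with
  | add p q hp hq => simp [hp, hq, mul_add]
  | monomial s a =>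
    rw [pderiv_monomial]
    rw [coeff_monomial, coeff_monomial]
    by_cases h : s = m + Finsupp.single v 1
    · subst h
      have h1 : m + Finsupp.single v 1 - Finsupp.single v 1 = m := by
        ext x; simp [Finsupp.single_apply]
      rw [if_pos h1]
      simp [Finsupp.single_apply, mul_comm]
    · rw [if_neg h]
      by_cases h2 : s v = 0
      · split <;> simp [h2]
      · have h3 : ¬ (s - Finsupp.single v 1 = m) := by
          intro h4
          apply h
          ext x
          have h4x := DFunLike.congr_fun h4 x
          simp only [Finsupp.tsub_apply, Finsupp.coe_add, Pi.add_apply,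
            Finsupp.single_apply] at h4x ⊢
          by_cases hx : v = x
          · subst hx; rw [if_pos rfl] at h4x ⊢; omega
          · rw [if_neg hx] at h4x ⊢; omega
        rw [if_neg h3]
        simp

theorem coeff_pderiv_iterate (v : σ) (k : ℕ) (m : σ →₀ ℕ) (hm : m v = 0)
    (p : MvPolynomial σ Rc) :
    coeff m ((fun q => pderiv v q)^[k] p) = (k.factorial : Rc) * coeff (m + Finsupp.single v k) p := by
  induction k generalizing p with
  | zero => simp
  | succ k ih =>
    rw [Function.iterate_succ_apply, ih (pderiv v p), coeff_pderiv]
    have h1 : (m + Finsupp.single v k) v = k := by simp [hm]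
    rw [h1]
    have h2 : m + Finsupp.single v k + Finsupp.single v 1 = m + Finsupp.single v (k+1) := by
      ext x; simp only [Finsupp.coe_add, Pi.add_apply, Finsupp.single_apply]
      split <;> omega
    rw [h2, Nat.factorial_succ, Nat.cast_mul]
    ring
end L0

section SeriesLemmas

theorem coeff_Bser (n r k : ℕ) : PowerSeries.coeff k (Bser n r)
    = if k = 0 then 1 else if h : 1 ≤ k ∧ k ≤ r then X (Sum.inr ⟨r - k, by omega⟩) else 0 := by
  rw [Bser, ser, PowerSeries.coeff_mk]
  by_cases h0 : k = 0
  · simp [h0]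
  · rw [if_neg h0, if_neg h0]
    by_cases h : 1 ≤ k ∧ k ≤ r
    · rw [dif_pos h, if_pos h.2]
    · rw [dif_neg h, if_neg (by omega : ¬ k ≤ r)]

theorem coeff_Aser (n r k : ℕ) : PowerSeries.coeff k (Aser n r)
    = if k = 0 then 1 else if h : 1 ≤ k ∧ k ≤ n then X (Sum.inl ⟨n - k, by omega⟩) else 0 := by
  rw [Aser, ser, PowerSeries.coeff_mk]
  by_cases h0 : k = 0
  · simp [h0]
  · rw [if_neg h0, if_neg h0]
    by_cases h : 1 ≤ k ∧ k ≤ n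
    · rw [dif_pos h, if_pos h.2]
    · rw [dif_neg h, if_neg (by omega : ¬ k ≤ n)]

theorem map_cc_Bser (n r : ℕ) :
    PowerSeries.map (constantCoeff : R n r →+* ℂ) (Bser n r) = 1 := by
  ext k
  rw [PowerSeries.coeff_map, coeff_Bser, PowerSeries.coeff_one]
  split_ifs <;> simp

theorem map_cc_Aser (n r : ℕ) :
    PowerSeries.map (constantCoeff : R n r →+* ℂ) (Aser n r) = 1 := by
  ext k
  rw [PowerSeries.coeff_map, coeff_Aser, PowerSeries.coeff_one]
  split_ifs <;> simp

theorem cc_Bser (n r : ℕ) : PowerSeries.constantCoeff (Bser n r) = 1 := by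
  rw [← PowerSeries.coeff_zero_eq_constantCoeff_apply, coeff_Bser]
  simp

theorem cc_Aser (n r : ℕ) : PowerSeries.constantCoeff (Aser n r) = 1 := by
  rw [← PowerSeries.coeff_zero_eq_constantCoeff_apply, coeff_Aser]
  simp

end SeriesLemmas

section BinvLemmas
variable {n r : ℕ}

theorem cc_Binv (Binv : PowerSeries (R n r)) (hBinv : Bser n r * Binv = 1) :
    PowerSeries.constantCoeff Binv = 1 := by
  have h := congrArg (PowerSeries.constantCoeff) hBinv
  rw [_root_.map_mul, _root_.map_one, cc_Bser, one_mul] at h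
  exact h

theorem beta_zero (Binv : PowerSeries (R n r)) (hBinv : Bser n r * Binv = 1) :
    PowerSeries.coeff 0 Binv = 1 := by
  rw [PowerSeries.coeff_zero_eq_constantCoeff_apply, cc_Binv Binv hBinv]

theorem map_cc_Binv (Binv : PowerSeries (R n r)) (hBinv : Bser n r * Binv = 1) :
    PowerSeries.map (constantCoeff : R n r →+* ℂ) Binv = 1 := by
  have h := congrArg (PowerSeries.map (constantCoeff : R n r →+* ℂ)) hBinv
  rw [_root_.map_mul, _root_.map_one, map_cc_Bser, one_mul] at h
  exact h

theorem cc_beta (Binv : PowerSeries (R n r)) (hBinv : Bser n r * Binv = 1) (K : ℕ) :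
    constantCoeff (PowerSeries.coeff K Binv) = if K = 0 then (1:ℂ) else 0 := by
  have h := congrArg (PowerSeries.coeff K) (map_cc_Binv Binv hBinv)
  rw [PowerSeries.coeff_map, PowerSeries.coeff_one] at h
  exact h

theorem coeff0_beta (Binv : PowerSeries (R n r)) (hBinv : Bser n r * Binv = 1) (K : ℕ) :
    coeff (0 : (Fin n ⊕ Fin r) →₀ ℕ) (PowerSeries.coeff K Binv)
      = if K = 0 then (1:ℂ) else 0 := by
  rw [← cc_beta Binv hBinv K, constantCoeff_eq]

theorem beta_rec (Binv : PowerSeries (R n r)) (hBinv : Bser n r * Binv = 1)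
    (μ : (Fin n ⊕ Fin r) →₀ ℕ) (K : ℕ) (hK : 1 ≤ K) :
    coeff μ (PowerSeries.coeff K Binv)
      = -∑ p ∈ Finset.range K,
          coeff μ (PowerSeries.coeff (p+1) (Bser n r)
            * PowerSeries.coeff (K-(p+1)) Binv) := by
  have h0 : PowerSeries.coeff K (Bser n r * Binv) = 0 := by
    rw [hBinv, PowerSeries.coeff_one, if_neg (by omega)]
  rw [PowerSeries.coeff_mul,
    Finset.Nat.sum_antidiagonal_eq_sum_range_succ
      (fun a b => PowerSeries.coeff a (Bser n r) * PowerSeries.coeff b Binv),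
    Finset.sum_range_succ'] at h0
  have hB0 : PowerSeries.coeff 0 (Bser n r) = 1 := by rw [coeff_Bser]; simp
  rw [hB0, one_mul, Nat.sub_zero] at h0
  have h1 := congrArg (coeff μ) h0
  rw [coeff_add, coeff_sum, coeff_zero] at h1
  linear_combination h1

theorem term_eval (Binv : PowerSeries (R n r))
    (μ : (Fin n ⊕ Fin r) →₀ ℕ) (p q : ℕ) (hp : 1 ≤ p) :
    coeff μ (PowerSeries.coeff p (Bser n r) * PowerSeries.coeff q Binv)
      = if h : p ≤ r then
          (if Sum.inr (⟨r - p, by omega⟩ : Fin r) ∈ μ.support then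
            coeff (μ - Finsupp.single (Sum.inr (⟨r - p, by omega⟩ : Fin r)) 1)
              (PowerSeries.coeff q Binv)
          else 0)
        else 0 := by
  rw [coeff_Bser, if_neg (by omega : ¬ p = 0)]
  by_cases h : p ≤ r
  · rw [dif_pos (⟨hp, h⟩ : 1 ≤ p ∧ p ≤ r), dif_pos h, coeff_X_mul']
  · rw [dif_neg (by omega : ¬ (1 ≤ p ∧ p ≤ r)), dif_neg h, zero_mul, coeff_zero]

end BinvLemmas

section KL
variable {n r : ℕ}

theorem KLa (Binv : PowerSeries (R n r)) (hBinv : Bser n r * Binv = 1) :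
    ∀ (K : ℕ) (μ : (Fin n ⊕ Fin r) →₀ ℕ) (i : Fin n), μ (Sum.inl i) ≠ 0 →
      coeff μ (PowerSeries.coeff K Binv) = 0 := by
  intro K
  induction K using Nat.strong_induction_on with
  | _ K ih =>
    intro μ i hi
    rcases Nat.eq_zero_or_pos K with h | h
    · subst h
      rw [beta_zero Binv hBinv, coeff_one, if_neg]
      intro h'
      apply hi
      rw [← h']
      rfl
    · rw [beta_rec Binv hBinv μ K h]
      rw [Finset.sum_eq_zero, neg_zero]
      intro p _
      rw [term_eval Binv μ (p+1) (K-(p+1)) (by omega)]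
      split_ifs with hle hmem
      · apply ih (K-(p+1)) (by omega) _ i
        simpa [Finsupp.tsub_apply, Finsupp.single_apply] using hi
      · rfl
      · rfl

theorem KL0 (hr : 0 < r) (Binv : PowerSeries (R n r)) (hBinv : Bser n r * Binv = 1) (t : ℕ) :
    ∀ K : ℕ, coeff (Finsupp.single (Sum.inr (⟨0, hr⟩ : Fin r)) t)
        (PowerSeries.coeff K Binv)
      = if K = t * r then (-1 : ℂ)^t else 0 := by
  induction t with
  | zero =>
    intro K
    simp only [Finsupp.single_zero, Nat.zero_mul, pow_zero]
    exact coeff0_beta Binv hBinv K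
  | succ t ih =>
    intro K
    rcases Nat.eq_zero_or_pos K with h0 | h0
    · subst h0
      rw [beta_zero Binv hBinv, coeff_one,
        if_neg (by rw [eq_comm, Finsupp.single_eq_zero]; omega),
        if_neg (by have : (t+1) * r = t*r + r := by ring
                   omega)]
    · rw [beta_rec Binv hBinv _ K h0]
      have hterm : ∀ p ∈ Finset.range K,
          coeff (Finsupp.single (Sum.inr (⟨0, hr⟩ : Fin r)) (t+1))
            (PowerSeries.coeff (p+1) (Bser n r)
              * PowerSeries.coeff (K-(p+1)) Binv)
          = if p = r - 1 then (if K - r = t * r then (-1:ℂ)^t else 0) else 0 := by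
        intro p _
        rw [term_eval Binv _ (p+1) _ (by omega)]
        by_cases hle : p + 1 ≤ r
        · rw [dif_pos hle]
          by_cases hpr : p = r - 1
          · have hEq : (⟨r - (p+1), by omega⟩ : Fin r) = ⟨0, hr⟩ := Fin.ext (by simp; omega)
            rw [hEq]
            rw [if_pos (by rw [Finsupp.mem_support_iff, Finsupp.single_apply, if_pos rfl]; omega)]
            have hsub : (Finsupp.single (Sum.inr (⟨0, hr⟩ : Fin r)) (t+1) : (Fin n ⊕ Fin r) →₀ ℕ)
                - Finsupp.single (Sum.inr (⟨0, hr⟩ : Fin r)) 1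
                = Finsupp.single (Sum.inr (⟨0, hr⟩ : Fin r)) t := by
              ext x
              rw [Finsupp.tsub_apply]
              rcases eq_or_ne (Sum.inr (⟨0, hr⟩ : Fin r)) x with hx | hx
              · rw [← hx]; simp
              · simp [Finsupp.single_apply, if_neg hx]
            rw [hsub, ih (K-(p+1)), if_pos hpr]
            have : K - (p+1) = K - r := by omega
            rw [this]
          · rw [if_neg hpr, if_neg]
            rw [Finsupp.mem_support_iff]
            simp only [Finsupp.single_apply, ne_eq, not_not]
            rw [if_neg]
            intro hc
            have := Sum.inr.inj hc
            have := congrArg Fin.val this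
            simp at this
            omega
        · rw [dif_neg hle, if_neg (by omega : ¬ p = r - 1)]
      rw [Finset.sum_congr rfl hterm, Finset.sum_ite_eq' (Finset.range K) (r-1)]
      simp only [Finset.mem_range]
      have hmul : (t+1) * r = t*r + r := by ring
      rw [hmul]
      generalize t * r = x
      split_ifs with hc1 hc2 hc3 hc4 hc5 hc6 <;>
        first
        | (exfalso; omega)
        | ring
        | simp

end KL

section KL1sec
variable {n r : ℕ}

theorem KL1 (hr : 0 < r) (Binv : PowerSeries (R n r)) (hBinv : Bser n r * Binv = 1)
    (w : Fin r) (hw : 0 < (w : ℕ)) (t : ℕ) :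
    ∀ K : ℕ, coeff (Finsupp.single (Sum.inr (⟨0, hr⟩ : Fin r)) t
          + Finsupp.single (Sum.inr w) 1 : (Fin n ⊕ Fin r) →₀ ℕ)
        (PowerSeries.coeff K Binv)
      = if K = t * r + (r - (w:ℕ)) then (-1:ℂ)^(t+1) * ((t:ℂ)+1) else 0 := by
  have hwr : (w:ℕ) < r := w.isLt
  have hne : (Sum.inr (⟨0, hr⟩ : Fin r) : Fin n ⊕ Fin r) ≠ Sum.inr w := by
    intro h
    have := congrArg Fin.val (Sum.inr.inj h)
    simp at this
    omega
  have hne2 : (Sum.inr w : Fin n ⊕ Fin r) ≠ Sum.inr (⟨0, hr⟩ : Fin r) := Ne.symm hne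
  induction t with
  | zero =>
    have hμ : (Finsupp.single (Sum.inr (⟨0, hr⟩ : Fin r)) 0
          + Finsupp.single (Sum.inr w) 1 : (Fin n ⊕ Fin r) →₀ ℕ)
        = Finsupp.single (Sum.inr w) 1 := by
      rw [Finsupp.single_zero, zero_add]
    intro K
    rw [hμ]
    rcases Nat.eq_zero_or_pos K with h0 | h0
    · subst h0
      rw [beta_zero Binv hBinv, coeff_one,
        if_neg (by rw [eq_comm, Finsupp.single_eq_zero]; omega),
        if_neg (by have : 0 * r = 0 := by ring
                   omega)]
    · rw [beta_rec Binv hBinv _ K h0]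
      have hterm : ∀ p ∈ Finset.range K,
          coeff (Finsupp.single (Sum.inr w) 1 : (Fin n ⊕ Fin r) →₀ ℕ)
            (PowerSeries.coeff (p+1) (Bser n r)
              * PowerSeries.coeff (K-(p+1)) Binv)
          = if p = r - (w:ℕ) - 1 then (if K - (r - (w:ℕ)) = 0 then (1:ℂ) else 0) else 0 := by
        intro p _
        rw [term_eval Binv _ (p+1) _ (by omega)]
        by_cases hle : p + 1 ≤ r
        · rw [dif_pos hle]
          by_cases hp1 : p = r - (w:ℕ) - 1
          · have hEq : (⟨r - (p+1), by omega⟩ : Fin r) = w := Fin.ext (by simp; omega)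
            rw [hEq]
            rw [if_pos (by rw [Finsupp.mem_support_iff, Finsupp.single_apply, if_pos rfl]; omega)]
            have hsub : (Finsupp.single (Sum.inr w) 1 : (Fin n ⊕ Fin r) →₀ ℕ)
                - Finsupp.single (Sum.inr w) 1 = 0 := by
              ext x
              simp [Finsupp.tsub_apply]
            rw [hsub, coeff0_beta Binv hBinv, if_pos hp1]
            have hKp : K - (p+1) = K - (r - (w:ℕ)) := by omega
            rw [hKp]
          · rw [if_neg hp1, if_neg]
            rw [Finsupp.mem_support_iff]
            simp only [Finsupp.single_apply, ne_eq, not_not]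
            rw [if_neg]
            intro hc
            have := congrArg Fin.val (Sum.inr.inj hc)
            simp at this
            omega
        · rw [dif_neg hle, if_neg (by omega : ¬ p = r - (w:ℕ) - 1)]
      rw [Finset.sum_congr rfl hterm, Finset.sum_ite_eq' (Finset.range K) (r - (w:ℕ) - 1)]
      simp only [Finset.mem_range]
      have hz : 0 * r = 0 := by ring
      rw [hz, zero_add]
      split_ifs with hc1 hc2 hc3 hc4 hc5 <;>
        first
        | (exfalso; omega)
        | norm_num
  | succ t ih =>
    intro K
    rcases Nat.eq_zero_or_pos K with h0 | h0
    · subst h0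
      rw [beta_zero Binv hBinv, coeff_one, if_neg, if_neg]
      · have hp : 0 < (t+1) * r := Nat.mul_pos (Nat.succ_pos t) hr
        omega
      · intro h'
        have h'' := DFunLike.congr_fun h' (Sum.inr (⟨0, hr⟩ : Fin r))
        rw [Finsupp.add_apply, Finsupp.single_apply, Finsupp.single_apply,
          if_pos rfl, if_neg hne2] at h''
        simp at h''
    · rw [beta_rec Binv hBinv _ K h0]
      have hterm : ∀ p ∈ Finset.range K,
          coeff (Finsupp.single (Sum.inr (⟨0, hr⟩ : Fin r)) (t+1)
              + Finsupp.single (Sum.inr w) 1 : (Fin n ⊕ Fin r) →₀ ℕ)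
            (PowerSeries.coeff (p+1) (Bser n r)
              * PowerSeries.coeff (K-(p+1)) Binv)
          = (if p = r - 1 then
                (if K - r = t * r + (r - (w:ℕ)) then (-1:ℂ)^(t+1) * ((t:ℂ)+1) else 0)
              else 0)
            + (if p = r - (w:ℕ) - 1 then
                (if K - (r - (w:ℕ)) = (t+1) * r then (-1:ℂ)^(t+1) else 0)
              else 0) := by
        intro p _
        rw [term_eval Binv _ (p+1) _ (by omega)]
        by_cases hle : p + 1 ≤ r
        · rw [dif_pos hle]
          by_cases hp2 : p = r - 1
          · have hEq : (⟨r - (p+1), by omega⟩ : Fin r) = ⟨0, hr⟩ := Fin.ext (by simp; omega)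
            rw [hEq]
            rw [if_pos (by
              rw [Finsupp.mem_support_iff, Finsupp.add_apply, Finsupp.single_apply,
                Finsupp.single_apply, if_pos rfl, if_neg hne2]
              omega)]
            have hsub : (Finsupp.single (Sum.inr (⟨0, hr⟩ : Fin r)) (t+1)
                  + Finsupp.single (Sum.inr w) 1 : (Fin n ⊕ Fin r) →₀ ℕ)
                - Finsupp.single (Sum.inr (⟨0, hr⟩ : Fin r)) 1
                = Finsupp.single (Sum.inr (⟨0, hr⟩ : Fin r)) t
                  + Finsupp.single (Sum.inr w) 1 := by
              ext x
              simp only [Finsupp.tsub_apply, Finsupp.coe_add, Pi.add_apply,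
                Finsupp.single_apply]
              split_ifs <;> omega
            rw [hsub]
            have hKp : K - (p+1) = K - r := by omega
            rw [hKp, ih (K - r), if_pos hp2,
              if_neg (show ¬ p = r - (w:ℕ) - 1 by omega), add_zero]
          · by_cases hp1 : p = r - (w:ℕ) - 1
            · have hEq : (⟨r - (p+1), by omega⟩ : Fin r) = w := Fin.ext (by simp; omega)
              rw [hEq]
              rw [if_pos (by
                rw [Finsupp.mem_support_iff, Finsupp.add_apply, Finsupp.single_apply,
                  Finsupp.single_apply, if_neg hne, if_pos rfl]
                omega)]
              have hsub : (Finsupp.single (Sum.inr (⟨0, hr⟩ : Fin r)) (t+1)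
                    + Finsupp.single (Sum.inr w) 1 : (Fin n ⊕ Fin r) →₀ ℕ)
                  - Finsupp.single (Sum.inr w) 1
                  = Finsupp.single (Sum.inr (⟨0, hr⟩ : Fin r)) (t+1) := by
                ext x
                simp only [Finsupp.tsub_apply, Finsupp.coe_add, Pi.add_apply,
                  Finsupp.single_apply]
                split_ifs <;> omega
              rw [hsub]
              have hKp : K - (p+1) = K - (r - (w:ℕ)) := by omega
              rw [hKp, KL0 hr Binv hBinv (t+1) (K - (r - (w:ℕ))), if_neg hp2, if_pos hp1,
                zero_add]
            · rw [if_neg, if_neg hp2, if_neg hp1, add_zero]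
              rw [Finsupp.mem_support_iff]
              simp only [Finsupp.add_apply, Finsupp.single_apply, ne_eq, not_not]
              rw [if_neg, if_neg]
              · norm_num
              · intro hc
                have := congrArg Fin.val (Sum.inr.inj hc)
                simp at this
                omega
              · intro hc
                have := congrArg Fin.val (Sum.inr.inj hc)
                simp at this
                omega
        · rw [dif_neg hle, if_neg (by omega : ¬ p = r - 1),
            if_neg (by omega : ¬ p = r - (w:ℕ) - 1), add_zero]
      rw [Finset.sum_congr rfl hterm, Finset.sum_add_distrib,
        Finset.sum_ite_eq' (Finset.range K) (r - 1),
        Finset.sum_ite_eq' (Finset.range K) (r - (w:ℕ) - 1)]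
      simp only [Finset.mem_range]
      have hmul : (t+1) * r = t * r + r := by ring
      rw [hmul]
      split_ifs with hc1 hc2 hc3 hc4 hc5 hc6 hc7 hc8 hc9 <;>
        first
        | (exfalso; omega)
        | (push_cast; ring)
        | simp

end KL1sec

section CorSec
variable {n r : ℕ}

/-- purity is preserved by products -/
theorem purity_mul (p q : R n r)
    (hp : ∀ (μ : (Fin n ⊕ Fin r) →₀ ℕ) (i : Fin n), μ (Sum.inl i) ≠ 0 → coeff μ p = 0)
    (hq : ∀ (μ : (Fin n ⊕ Fin r) →₀ ℕ) (i : Fin n), μ (Sum.inl i) ≠ 0 → coeff μ q = 0) :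
    ∀ (μ : (Fin n ⊕ Fin r) →₀ ℕ) (i : Fin n), μ (Sum.inl i) ≠ 0 → coeff μ (p * q) = 0 := by
  intro μ i hi
  rw [MvPolynomial.coeff_mul]
  apply Finset.sum_eq_zero
  intro x hx
  rw [Finset.HasAntidiagonal.mem_antidiagonal] at hx
  have hx' : x.1 (Sum.inl i) + x.2 (Sum.inl i) = μ (Sum.inl i) := by
    rw [← hx]; rfl
  by_cases h1 : x.1 (Sum.inl i) = 0
  · rw [hq x.2 i (by omega), mul_zero]
  · rw [hp x.1 i h1, zero_mul]

theorem KLa_pow (Binv : PowerSeries (R n r)) (hBinv : Bser n r * Binv = 1) (m : ℕ) :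
    ∀ (K : ℕ) (μ : (Fin n ⊕ Fin r) →₀ ℕ) (i : Fin n), μ (Sum.inl i) ≠ 0 →
      coeff μ (PowerSeries.coeff K (Binv ^ m)) = 0 := by
  induction m with
  | zero =>
    intro K μ i hi
    rw [pow_zero, PowerSeries.coeff_one]
    split_ifs
    · rw [coeff_one, if_neg]
      intro h'
      apply hi; rw [← h']; rfl
    · rw [coeff_zero]
  | succ m ih =>
    intro K μ i hi
    rw [pow_succ, PowerSeries.coeff_mul]
    rw [coeff_sum]
    apply Finset.sum_eq_zero
    intro x hx
    exact purity_mul _ _ (fun μ' i' h => ih x.1 μ' i' h) (fun μ' i' h => KLa Binv hBinv x.2 μ' i' h) μ i hi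

theorem map_cc_Binv_pow (Binv : PowerSeries (R n r)) (hBinv : Bser n r * Binv = 1) (m : ℕ) :
    PowerSeries.map (constantCoeff : R n r →+* ℂ) (Binv ^ m) = 1 := by
  rw [map_pow, map_cc_Binv Binv hBinv, one_pow]

theorem coeff0_gen (f : PowerSeries (R n r))
    (hf : PowerSeries.map (constantCoeff : R n r →+* ℂ) f = 1) (K : ℕ) :
    coeff (0 : (Fin n ⊕ Fin r) →₀ ℕ) (PowerSeries.coeff K f)
      = if K = 0 then (1:ℂ) else 0 := by
  have h := congrArg (PowerSeries.coeff K) hf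
  rw [PowerSeries.coeff_map, PowerSeries.coeff_one] at h
  exact h

/-- Cor A : pure-b coefficients of coeff k (f * Aser) see only f -/
theorem corA (f : PowerSeries (R n r)) (k : ℕ) (hk : k ≤ n)
    (ν : (Fin n ⊕ Fin r) →₀ ℕ) (hν : ∀ i : Fin n, ν (Sum.inl i) = 0) :
    coeff ν (PowerSeries.coeff k (f * Aser n r))
      = coeff ν (PowerSeries.coeff k f) := by
  rw [PowerSeries.coeff_mul, coeff_sum]
  rw [Finset.sum_eq_single_of_mem (k, 0)]
  · rw [coeff_Aser, if_pos rfl, mul_one]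
  · exact Finset.HasAntidiagonal.mem_antidiagonal.mpr (by simp)
  · intro x hx hxne
    rw [Finset.HasAntidiagonal.mem_antidiagonal] at hx
    have hx2 : 1 ≤ x.2 := by
      rcases Nat.eq_zero_or_pos x.2 with h | h
      · exfalso; apply hxne
        have : x.1 = k := by omega
        rw [← this, ← h]
      · exact h
    rw [coeff_Aser, if_neg (by omega), dif_pos ⟨hx2, by omega⟩, coeff_mul_X']
    rw [if_neg]
    rw [Finsupp.mem_support_iff]
    simp only [ne_eq, not_not]
    exact hν _

/-- Cor C : coefficient at (single a_j) + pure-b ν -/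
theorem corC (f : PowerSeries (R n r))
    (hfa : ∀ (K : ℕ) (μ : (Fin n ⊕ Fin r) →₀ ℕ) (i : Fin n), μ (Sum.inl i) ≠ 0 →
      coeff μ (PowerSeries.coeff K f) = 0)
    (k : ℕ) (hk1 : 1 ≤ k) (hkn : k ≤ n) (j : Fin n)
    (ν : (Fin n ⊕ Fin r) →₀ ℕ) (hν : ∀ i : Fin n, ν (Sum.inl i) = 0) :
    coeff (Finsupp.single (Sum.inl j) 1 + ν) (PowerSeries.coeff k (f * Aser n r))
      = if n - (j:ℕ) ≤ k then coeff ν (PowerSeries.coeff (k - (n - (j:ℕ))) f)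
        else 0 := by
  have hj : (j:ℕ) < n := j.isLt
  rw [PowerSeries.coeff_mul, coeff_sum,
    Finset.Nat.sum_antidiagonal_eq_sum_range_succ
      (fun a b => coeff (Finsupp.single (Sum.inl j) 1 + ν)
        (PowerSeries.coeff a f * PowerSeries.coeff b (Aser n r))) k]
  have hterm : ∀ p ∈ Finset.range (k+1),
      coeff (Finsupp.single (Sum.inl j) 1 + ν)
        (PowerSeries.coeff p f * PowerSeries.coeff (k-p) (Aser n r))
      = if p = k - (n - (j:ℕ)) then
          (if n - (j:ℕ) ≤ k then coeff ν (PowerSeries.coeff p f) else 0)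
        else 0 := by
    intro p hp
    rw [Finset.mem_range] at hp
    by_cases hu0 : k - p = 0
    · rw [coeff_Aser, if_pos hu0, mul_one]
      rw [hfa p _ j (by
        rw [Finsupp.add_apply, Finsupp.single_apply, if_pos rfl, hν j]
        omega)]
      rw [if_neg (by omega)]
    · rw [coeff_Aser, if_neg hu0, dif_pos ⟨by omega, by omega⟩, coeff_mul_X']
      by_cases hpos : p = k - (n - (j:ℕ)) ∧ n - (j:ℕ) ≤ k
      · have hEq : (⟨n - (k - p), by omega⟩ : Fin n) = j := Fin.ext (by simp; omega)
        rw [hEq]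
        rw [if_pos (by
          rw [Finsupp.mem_support_iff, Finsupp.add_apply, Finsupp.single_apply,
            if_pos rfl, hν j]
          omega)]
        have hsub : (Finsupp.single (Sum.inl j) 1 + ν : (Fin n ⊕ Fin r) →₀ ℕ)
            - Finsupp.single (Sum.inl j) 1 = ν := by
          ext x
          simp only [Finsupp.tsub_apply, Finsupp.coe_add, Pi.add_apply,
            Finsupp.single_apply]
          split_ifs <;> omega
        rw [hsub, if_pos hpos.1, if_pos hpos.2]
      · have hnotmem : Sum.inl (⟨n - (k-p), by omega⟩ : Fin n)
            ∉ (Finsupp.single (Sum.inl j) 1 + ν).support := by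
          rw [Finsupp.mem_support_iff, Finsupp.add_apply, Finsupp.single_apply,
            hν ⟨n - (k-p), by omega⟩]
          simp only [ne_eq, not_not, add_zero]
          rw [if_neg]
          intro hc
          have := congrArg Fin.val (Sum.inl.inj hc)
          simp at this
          exact hpos ⟨by omega, by omega⟩
        rw [if_neg hnotmem]
        split_ifs with ha hb
        · exact absurd ⟨ha, hb⟩ hpos
        · rfl
        · rfl
  rw [Finset.sum_congr rfl hterm, Finset.sum_ite_eq' (Finset.range (k+1)) (k - (n - (j:ℕ)))]
  rw [if_pos (by rw [Finset.mem_range]; omega)]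

/-- Cor B -/
theorem corB (f : PowerSeries (R n r))
    (hfa : ∀ (K : ℕ) (μ : (Fin n ⊕ Fin r) →₀ ℕ) (i : Fin n), μ (Sum.inl i) ≠ 0 →
      coeff μ (PowerSeries.coeff K f) = 0)
    (hf0 : PowerSeries.map (constantCoeff : R n r →+* ℂ) f = 1)
    (k : ℕ) (hk1 : 1 ≤ k) (hkn : k ≤ n) (j : Fin n) :
    coeff (Finsupp.single (Sum.inl j) 1) (PowerSeries.coeff k (f * Aser n r))
      = if (j:ℕ) = n - k then 1 else 0 := by
  have hj : (j:ℕ) < n := j.isLt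
  have h := corC f hfa k hk1 hkn j 0 (fun _ => rfl)
  rw [add_zero] at h
  rw [h]
  rw [coeff0_gen f hf0]
  split_ifs with h1 h2 h3 h4 <;> first | rfl | (exfalso; omega)

theorem coeff_Dser (n r k : ℕ) (d : Fin n → R n r) :
    PowerSeries.coeff k (Dser n r d)
      = if k = 0 then 1 else if h : 1 ≤ k ∧ k ≤ n then d ⟨n - k, by omega⟩ else 0 := by
  rw [Dser, ser, PowerSeries.coeff_mk]
  by_cases h0 : k = 0
  · simp [h0]
  · rw [if_neg h0, if_neg h0]
    by_cases h : 1 ≤ k ∧ k ≤ n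
    · rw [dif_pos h, if_pos h.2]
    · rw [dif_neg h, if_neg (by omega : ¬ k ≤ n)]

theorem dformula (d : Fin n → R n r) (hd : dSpec n r d)
    (Binv : PowerSeries (R n r)) (hBinv : Bser n r * Binv = 1)
    (k : ℕ) (hk1 : 1 ≤ k) (hkn : k ≤ n) :
    d ⟨n - k, by omega⟩ = PowerSeries.coeff k (Binv * Aser n r) := by
  have h1 : PowerSeries.coeff k (Binv * (Bser n r * Dser n r d))
      = PowerSeries.coeff k (Binv * Aser n r) := by
    rw [PowerSeries.coeff_mul, PowerSeries.coeff_mul]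
    apply Finset.sum_congr rfl
    intro x hx
    rw [Finset.HasAntidiagonal.mem_antidiagonal] at hx
    rw [hd x.2 (by omega)]
  rw [← h1, ← mul_assoc, mul_comm Binv (Bser n r), hBinv, one_mul, coeff_Dser,
    if_neg (by omega), dif_pos ⟨hk1, hkn⟩]

end CorSec

section EntrySec
set_option maxHeartbeats 1000000
variable {n r : ℕ}

theorem entry_d (d : Fin n → R n r) (hd : dSpec n r d)
    (Binv : PowerSeries (R n r)) (hBinv : Bser n r * Binv = 1) (i j : Fin n) :
    coeff (Finsupp.single (Sum.inl j) 1) (d i) = if (j:ℕ) = (i:ℕ) then 1 else 0 := by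
  have hilt := i.isLt
  have hk1 : 1 ≤ n - (i:ℕ) := by omega
  have hkn : n - (i:ℕ) ≤ n := by omega
  have hi : i = ⟨n - (n - (i:ℕ)), by omega⟩ := Fin.ext (by simp; omega)
  rw [hi, dformula d hd Binv hBinv (n - (i:ℕ)) hk1 hkn,
    corB Binv (KLa Binv hBinv) (map_cc_Binv Binv hBinv) _ hk1 hkn j]

theorem entry_gamma (Binv : PowerSeries (R n r)) (hBinv : Bser n r * Binv = 1)
    (q1 : ℕ) (γ : ℕ → R n r)
    (hγ : ∀ k, 1 ≤ k → k ≤ n →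
      γ (n - k) = PowerSeries.coeff k (Binv ^ q1 * Aser n r))
    (k : ℕ) (hk1 : 1 ≤ k) (hkn : k ≤ n) (j : Fin n) :
    coeff (Finsupp.single (Sum.inl j) 1) (γ (n - k)) = if (j:ℕ) = n - k then 1 else 0 := by
  rw [hγ k hk1 hkn,
    corB (Binv ^ q1) (KLa_pow Binv hBinv q1) (map_cc_Binv_pow Binv hBinv q1) k hk1 hkn j]

theorem entry_psi_high (hr : 0 < r) (hrn : r ≤ n)
    (d : Fin n → R n r) (hd : dSpec n r d)
    (Binv : PowerSeries (R n r)) (hBinv : Bser n r * Binv = 1)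
    (j : Fin n) (m : ℕ) (hrm : r ≤ m) (hmn : m < n) :
    coeff (Finsupp.single (Sum.inl j) 1) (psi n r hr hrn d m)
      = if (j:ℕ) = m then (-1:ℂ)^(m / r) * ((m / r).factorial : ℂ) else 0 := by
  have hj : (j:ℕ) < n := j.isLt
  have hmod : m % r < r := Nat.mod_lt _ hr
  have hsm : r * (m / r) + m % r = m := Nat.div_add_mod m r
  have hs1 : 1 ≤ m / r := (Nat.one_le_div_iff hr).mpr hrm
  obtain ⟨s', hs'⟩ : ∃ s', m / r = s' + 1 := ⟨m / r - 1, by omega⟩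
  rw [hs'] at hsm ⊢
  have hb1 : r * (s' + 1) = s' * r + r := by ring
  simp only [psi, dif_neg (by omega : ¬ m < r), hs', Nat.add_sub_cancel]
  rw [coeff_pderiv_iterate (Sum.inr (⟨0, hr⟩ : Fin r)) s' _
    (by simp [Finsupp.single_apply]) _]
  rw [coeff_pderiv]
  have hd19 : (⟨r - 1, by omega⟩ : Fin n) = ⟨n - (n - r + 1), by omega⟩ :=
    Fin.ext (by simp; omega)
  rw [hd19, dformula d hd Binv hBinv (n - r + 1) (by omega) (by omega), add_assoc]
  rw [corC Binv (KLa Binv hBinv) (n - r + 1) (by omega) (by omega) j _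
    (by intro i'; simp [Finsupp.single_apply])]
  by_cases hcase : m % r = r - 1
  · have hw : (⟨r - 1 - m % r, by omega⟩ : Fin r) = ⟨0, hr⟩ := Fin.ext (by simp; omega)
    rw [hw, ← Finsupp.single_add, KL0 hr Binv hBinv (s' + 1)]
    have hE : ((Finsupp.single (Sum.inl j) 1
        + Finsupp.single (Sum.inr (⟨0, hr⟩ : Fin r)) s' : (Fin n ⊕ Fin r) →₀ ℕ))
          (Sum.inr (⟨0, hr⟩ : Fin r)) = s' := by
      simp [Finsupp.single_apply]
    rw [hE]
    have hb2 : (s' + 1) * r = s' * r + r := by ring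
    rw [hb2, Nat.factorial_succ]
    split_ifs with hA hB hC <;>
      first
      | (exfalso; omega)
      | (push_cast; ring)
      | simp
  · have hwpos : 0 < r - 1 - m % r := by omega
    rw [KL1 hr Binv hBinv ⟨r - 1 - m % r, by omega⟩ hwpos s']
    have hE : ((Finsupp.single (Sum.inl j) 1
        + Finsupp.single (Sum.inr (⟨0, hr⟩ : Fin r)) s' : (Fin n ⊕ Fin r) →₀ ℕ))
          (Sum.inr (⟨r - 1 - m % r, by omega⟩ : Fin r)) = 0 := by
      simp only [Finsupp.add_apply, Finsupp.single_apply]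
      rw [if_neg (by simp), if_neg]
      · norm_num
      · intro hc
        have := congrArg Fin.val (Sum.inr.inj hc)
        simp at this
        omega
    rw [hE]
    have hval : ((⟨r - 1 - m % r, by omega⟩ : Fin r) : ℕ) = r - 1 - m % r := rfl
    rw [hval, Nat.factorial_succ]
    split_ifs with hA hB hC <;>
      first
      | (exfalso; omega)
      | (push_cast; ring)
      | simp

theorem cc_psi_high (hr : 0 < r) (hrn : r ≤ n)
    (d : Fin n → R n r) (hd : dSpec n r d)
    (Binv : PowerSeries (R n r)) (hBinv : Bser n r * Binv = 1)
    (m : ℕ) (hrm : r ≤ m) (hmn : m < n) :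
    coeff (0 : (Fin n ⊕ Fin r) →₀ ℕ) (psi n r hr hrn d m) = 0 := by
  have hmod : m % r < r := Nat.mod_lt _ hr
  have hsm : r * (m / r) + m % r = m := Nat.div_add_mod m r
  have hs1 : 1 ≤ m / r := (Nat.one_le_div_iff hr).mpr hrm
  obtain ⟨s', hs'⟩ : ∃ s', m / r = s' + 1 := ⟨m / r - 1, by omega⟩
  rw [hs'] at hsm
  have hb1 : r * (s' + 1) = s' * r + r := by ring
  simp only [psi, dif_neg (by omega : ¬ m < r), hs', Nat.add_sub_cancel]
  rw [coeff_pderiv_iterate (Sum.inr (⟨0, hr⟩ : Fin r)) s' _ rfl _]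
  rw [coeff_pderiv, zero_add]
  have hd19 : (⟨r - 1, by omega⟩ : Fin n) = ⟨n - (n - r + 1), by omega⟩ :=
    Fin.ext (by simp; omega)
  rw [hd19, dformula d hd Binv hBinv (n - r + 1) (by omega) (by omega)]
  rw [corA Binv (n - r + 1) (by omega) _
    (by intro i'; simp [Finsupp.single_apply])]
  by_cases hcase : m % r = r - 1
  · have hw : (⟨r - 1 - m % r, by omega⟩ : Fin r) = ⟨0, hr⟩ := Fin.ext (by simp; omega)
    rw [hw, ← Finsupp.single_add, KL0 hr Binv hBinv (s' + 1)]
    have hb2 : (s' + 1) * r = s' * r + r := by ring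
    rw [hb2, if_neg (by omega)]
    ring
  · have hwpos : 0 < r - 1 - m % r := by omega
    rw [KL1 hr Binv hBinv ⟨r - 1 - m % r, by omega⟩ hwpos s']
    have hval : ((⟨r - 1 - m % r, by omega⟩ : Fin r) : ℕ) = r - 1 - m % r := rfl
    rw [hval, if_neg (by omega)]
    ring

theorem cc_d (d : Fin n → R n r) (hd : dSpec n r d)
    (Binv : PowerSeries (R n r)) (hBinv : Bser n r * Binv = 1) (i : Fin n) :
    coeff (0 : (Fin n ⊕ Fin r) →₀ ℕ) (d i) = 0 := by
  have hilt := i.isLt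
  have hi : i = ⟨n - (n - (i:ℕ)), by omega⟩ := Fin.ext (by simp; omega)
  rw [hi, dformula d hd Binv hBinv (n - (i:ℕ)) (by omega) (by omega),
    corA Binv (n - (i:ℕ)) (by omega) _ (fun _ => rfl),
    coeff0_gen Binv (map_cc_Binv Binv hBinv), if_neg (by omega)]

theorem cc_gamma (Binv : PowerSeries (R n r)) (hBinv : Bser n r * Binv = 1)
    (q1 : ℕ) (γ : ℕ → R n r)
    (hγ : ∀ k, 1 ≤ k → k ≤ n →
      γ (n - k) = PowerSeries.coeff k (Binv ^ q1 * Aser n r))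
    (k : ℕ) (hk1 : 1 ≤ k) (hkn : k ≤ n) :
    coeff (0 : (Fin n ⊕ Fin r) →₀ ℕ) (γ (n - k)) = 0 := by
  rw [hγ k hk1 hkn, corA (Binv ^ q1) k hkn _ (fun _ => rfl),
    coeff0_gen (Binv ^ q1) (map_cc_Binv_pow Binv hBinv q1), if_neg (by omega)]

end EntrySec

section FinalHelpers
variable {n r : ℕ}

theorem ev0_pderiv (v : Fin n ⊕ Fin r) (p : R n r) :
    ev0 n r (pderiv v p) = coeff (Finsupp.single v 1) p := by
  have h : ev0 n r (pderiv v p) = coeff 0 (pderiv v p) := by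
    rw [ev0, eval_zero', constantCoeff_eq]
  rw [h, coeff_pderiv]
  simp

theorem Bpow_coeff_mem (T : Subalgebra ℂ (R n r))
    (hb : ∀ j : Fin r, (X (Sum.inr j) : R n r) ∈ T) (m : ℕ) :
    ∀ p : ℕ, PowerSeries.coeff p (Bser n r ^ m) ∈ T := by
  induction m with
  | zero =>
    intro p
    rw [pow_zero, PowerSeries.coeff_one]
    split_ifs
    · exact T.one_mem
    · exact T.zero_mem
  | succ m ih =>
    intro p
    rw [pow_succ, PowerSeries.coeff_mul]
    apply T.sum_mem
    intro x _
    apply T.mul_mem (ih x.1)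
    rw [coeff_Bser]
    split_ifs
    · exact T.one_mem
    · exact hb _
    · exact T.zero_mem

end FinalHelpers

/-- Lemma 3.15: `(ψ_0,…,ψ_{q_1r-1},γ_{n-r_1},…,γ_{n-1},b_0,…,b_{r-1})` is a
local coordinate system around `0` on `ℂ^n × ℂ^r`, and `R = ℂ[γ_0,…,γ_{n-1},b_0,…,b_{r-1}]`. -/
theorem stmt18 (n r q1 r1 : ℕ) (hq1 : 1 ≤ q1) (h1 : 0 < r1) (h2 : r1 < r)
    (hn : n = q1 * r + r1)
    (d : Fin n → R n r) (hd : dSpec n r d)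
    (Binv : PowerSeries (R n r)) (hBinv : Bser n r * Binv = 1)
    (γ : ℕ → R n r)
    (hγ : ∀ k, 1 ≤ k → k ≤ n →
      γ (n - k) = PowerSeries.coeff k (Binv ^ q1 * Aser n r)) :
    (∀ v : Fin n ⊕ Fin r,
      constantCoeff (tup n r q1 (by omega) (rle q1 r r1 n (by omega) hn) d γ v) = 0)
    ∧ IsUnit ((jacSq n r (tup n r q1 (by omega) (rle q1 r r1 n (by omega) hn) d γ)).map (ev0 n r)).det
    ∧ Algebra.adjoin ℂ ((Set.range fun i : Fin n => γ (i : ℕ))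
        ∪ Set.range fun j : Fin r => (X (Sum.inr j) : R n r)) = ⊤ := by
  have hr : 0 < r := by omega
  have hrn : r ≤ n := rle q1 r r1 n (by omega) hn
  refine ⟨?_, ?_, ?_⟩
  · -- Part 1 : constant terms vanish
    intro v
    cases v with
    | inr j => simp [tup]
    | inl i =>
      have hilt := i.isLt
      simp only [tup, Sum.elim_inl]
      rw [constantCoeff_eq]
      split_ifs with hlt
      · by_cases hir : (i:ℕ) < r
        · simp only [psi, dif_pos hir, Fin.eta]
          exact cc_d d hd Binv hBinv i
        · exact cc_psi_high _ _ d hd Binv hBinv (i:ℕ) (by omega) hilt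
      · have h : (i:ℕ) = n - (n - (i:ℕ)) := by omega
        rw [h]
        exact cc_gamma Binv hBinv q1 γ hγ (n - (i:ℕ)) (by omega) (by omega)
  · -- Part 2 : invertibility of the Jacobian at the origin
    have key : ∀ (hra : 0 < r) (hrna : r ≤ n),
        IsUnit ((jacSq n r (tup n r q1 hra hrna d γ)).map (ev0 n r)).det := by
      intro hra hrna
      set C : Fin n → ℂ := fun i =>
        if (i:ℕ) < r ∨ q1 * r ≤ (i:ℕ) then 1
        else (-1:ℂ)^((i:ℕ)/r) * (((i:ℕ)/r).factorial : ℂ) with hC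
      set M := (jacSq n r (tup n r q1 hra hrna d γ)).map (ev0 n r) with hM
      have hMe : ∀ (u : Fin n ⊕ Fin r) (v : Fin n ⊕ Fin r),
          M u v = coeff (Finsupp.single v 1) (tup n r q1 hra hrna d γ u) := by
        intro u v
        rw [hM]
        simp only [Matrix.map_apply, jacSq, Matrix.of_apply]
        exact ev0_pderiv v _
      have hrow : ∀ (i j : Fin n), M (Sum.inl i) (Sum.inl j) = if i = j then C i else 0 := by
        intro i j
        have hilt := i.isLt
        rw [hMe]
        simp only [tup, Sum.elim_inl]
        by_cases hlt : (i:ℕ) < q1 * r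
        · rw [if_pos hlt]
          by_cases hir : (i:ℕ) < r
          · simp only [psi, dif_pos hir, Fin.eta]
            rw [entry_d d hd Binv hBinv i j]
            have hCv : C i = 1 := by rw [hC]; simp only; rw [if_pos (Or.inl hir)]
            rw [hCv]
            simp only [Fin.ext_iff]
            split_ifs <;> first | rfl | (exfalso; omega)
          · rw [entry_psi_high hra hrna d hd Binv hBinv j (i:ℕ) (by omega) hilt]
            have hCv : C i = (-1:ℂ)^((i:ℕ)/r) * (((i:ℕ)/r).factorial : ℂ) := by
              rw [hC]; simp only; rw [if_neg (by omega)]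
            rw [hCv]
            simp only [Fin.ext_iff]
            split_ifs <;> first | rfl | (exfalso; omega)
        · rw [if_neg hlt]
          have hq : (i:ℕ) = n - (n - (i:ℕ)) := by omega
          rw [hq, entry_gamma Binv hBinv q1 γ hγ (n - (i:ℕ)) (by omega) (by omega) j]
          have hCv : C i = 1 := by rw [hC]; simp only; rw [if_pos (Or.inr (by omega))]
          rw [hCv]
          simp only [Fin.ext_iff]
          split_ifs <;> first | rfl | (exfalso; omega)
      have hcol0 : ∀ (i : Fin r) (j : Fin n), M (Sum.inr i) (Sum.inl j) = 0 := by
        intro i j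
        rw [hMe]
        simp only [tup, Sum.elim_inr]
        rw [coeff_single_X]
        simp
      have hid : ∀ (i v : Fin r), M (Sum.inr i) (Sum.inr v) = if i = v then 1 else 0 := by
        intro i v
        rw [hMe]
        simp only [tup, Sum.elim_inr]
        rw [coeff_single_X]
        simp [eq_comm]
      have h11 : M.toBlocks₁₁ = Matrix.diagonal C := by
        ext i j
        rw [Matrix.toBlocks₁₁]
        simp only [Matrix.of_apply]
        rw [hrow i j, Matrix.diagonal_apply]
      have h21 : M.toBlocks₂₁ = 0 := by
        ext i j
        rw [Matrix.toBlocks₂₁]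
        simp only [Matrix.of_apply, Matrix.zero_apply]
        exact hcol0 i j
      have h22 : M.toBlocks₂₂ = 1 := by
        ext i v
        rw [Matrix.toBlocks₂₂]
        simp only [Matrix.of_apply]
        rw [hid i v, Matrix.one_apply]
      have hdet : M.det = (Matrix.diagonal C).det := by
        conv_lhs => rw [← Matrix.fromBlocks_toBlocks M]
        rw [h11, h21, h22, Matrix.det_fromBlocks_zero₂₁, Matrix.det_one, mul_one]
      rw [hdet, Matrix.det_diagonal]
      apply isUnit_iff_ne_zero.mpr
      apply Finset.prod_ne_zero_iff.mpr
      intro i _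
      rw [hC]
      simp only
      split_ifs
      · exact one_ne_zero
      · exact mul_ne_zero (pow_ne_zero _ (by norm_num))
          (Nat.cast_ne_zero.mpr (Nat.factorial_ne_zero _))
    exact key _ _
  · -- Part 3 : R = ℂ[γ, b]
    rw [eq_top_iff, ← MvPolynomial.adjoin_range_X]
    apply Algebra.adjoin_le
    rintro v ⟨u, rfl⟩
    cases u with
    | inr j => exact Algebra.subset_adjoin (Set.mem_union_right _ ⟨j, rfl⟩)
    | inl i =>
      have hilt := i.isLt
      have hk1 : 1 ≤ n - (i:ℕ) := by omega
      have hkn : n - (i:ℕ) ≤ n := by omega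
      have hXA : (X (Sum.inl i) : R n r)
          = PowerSeries.coeff (n - (i:ℕ)) (Aser n r) := by
        rw [coeff_Aser, if_neg (by omega), dif_pos ⟨hk1, hkn⟩]
        congr 1
        congr 1
        exact Fin.ext (by simp; omega)
      rw [hXA]
      have hA : Aser n r = Bser n r ^ q1 * (Binv ^ q1 * Aser n r) := by
        rw [← mul_assoc, ← mul_pow, hBinv, one_pow, one_mul]
      rw [hA, PowerSeries.coeff_mul]
      apply Subalgebra.sum_mem
      intro x hx
      rw [Finset.HasAntidiagonal.mem_antidiagonal] at hx
      apply Subalgebra.mul_mem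
      · refine Bpow_coeff_mem _ (fun j => Algebra.subset_adjoin ?_) q1 x.1
        exact Set.mem_union_right _
          (⟨j, rfl⟩ : (X (Sum.inr j) : R n r)
            ∈ Set.range fun j : Fin r => (X (Sum.inr j) : R n r))
      · rcases Nat.eq_zero_or_pos x.2 with h0 | h0
        · rw [h0, PowerSeries.coeff_zero_eq_constantCoeff_apply, _root_.map_mul, _root_.map_pow,
            cc_Binv Binv hBinv, cc_Aser, one_pow, one_mul]
          exact Subalgebra.one_mem _
        · rw [← hγ x.2 h0 (by omega)]
          exact Algebra.subset_adjoin (Set.mem_union_left _ ⟨⟨n - x.2, by omega⟩, rfl⟩)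

end TB
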